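/- Let s ∈ ℂ with s ≠ 0 and let f = x·y⁴ + s·x²y² + y ∈ ℂ[x,y] (the polynomial xy⁴ + s(xy)² + y of the paper's Example 8.3). Then the total Milnor number of f equals 5, i.e. dim_ℂ ℂ[x,y]/(y⁴ + 2s·xy², 4xy³ + 2s·x²y + 1) = 5. -/

import Mathlib

open MvPolynomial

noncomputable section

/-- The polynomial f = xy⁴ + s·(xy)² + y of Example 8.3
    (variables: X 0 = x, X 1 = y). -/
def f₈₃ (s : ℂ) : MvPolynomial (Fin 2) ℂ :=
  X 0 * X 1 ^ 4 + C s * (X 0 ^ 2 * X 1 ^ 2) + X 1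

/-- for s ≠ 0, the total Milnor number of f = xy⁴ + s(xy)² + y equals 5,
    i.e. dim_ℂ ℂ[x,y]/(∂f/∂x, ∂f/∂y) = 5. -/
theorem total_milnor_number_example83 (s : ℂ) (hs : s ≠ 0) :
    Module.finrank ℂ
      (MvPolynomial (Fin 2) ℂ ⧸
        Ideal.span {pderiv 0 (f₈₃ s), pderiv 1 (f₈₃ s)}) = 5 := by
  have h2s : (2*s : ℂ) ≠ 0 := by simpa using hs
  have hd0 : pderiv 0 (f₈₃ s) = X 1 ^ 4 + C (2*s) * (X 0 * X 1 ^ 2) := by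
    simp [f₈₃, pderiv_mul, pderiv_pow, pderiv_X, C_mul, map_ofNat]; ring
  have hd1 : pderiv 1 (f₈₃ s)
      = 4 * (X 0 * X 1 ^ 3) + C (2*s) * (X 0 ^ 2 * X 1) + 1 := by
    simp [f₈₃, pderiv_mul, pderiv_pow, pderiv_X, C_mul, map_ofNat]; ring
  rw [hd0, hd1]
  set R := MvPolynomial (Fin 2) ℂ
  set G1 : R := X 1 ^ 4 + C (2*s) * (X 0 * X 1 ^ 2) with hG1def
  set G2 : R := 4 * (X 0 * X 1 ^ 3) + C (2*s) * (X 0 ^ 2 * X 1) + 1 with hG2def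
  set u : R := C (2*s) * X 0 + X 1 ^ 2 with hudef
  set r' : R := X 1 ^ 5 - C (2*s/3) with hr'def
  have hCinv : (C ((2*s)⁻¹) : R) * C (2*s) = 1 := by
    rw [← C_mul, inv_mul_cancel₀ h2s, C_1]
  have cancel : ∀ (J : Ideal R) (z : R), C (2*s) * z ∈ J → z ∈ J := by
    intro J z hz
    have hzz : z = C ((2*s)⁻¹) * (C (2*s) * z) := by
      rw [← mul_assoc, hCinv, one_mul]
    rw [hzz]; exact J.mul_mem_left _ hz
  have h3 : (3 : R) * C (2*s/3) = C (2*s) := by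
    rw [show (3:R) = C 3 from (map_ofNat C 3).symm, ← C_mul]
    congr 1; ring
  have hIJ : Ideal.span {G1, G2} = Ideal.span {u, r'} := by
    apply le_antisymm
    · rw [Ideal.span_le]
      rintro p hp
      simp only [Set.mem_insert_iff, Set.mem_singleton_iff] at hp
      rcases hp with rfl | rfl
      · exact Ideal.mem_span_pair.2 ⟨X 1 ^ 2, 0, by rw [hudef]; ring⟩
      · apply cancel
        refine Ideal.mem_span_pair.2 ⟨2 * X 1 ^ 3 + X 1 * u, -3, ?_⟩
        rw [hudef, hr'def, hG2def]
        linear_combination h3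
    · rw [Ideal.span_le]
      rintro p hp
      simp only [Set.mem_insert_iff, Set.mem_singleton_iff] at hp
      set I := Ideal.span ({G1, G2} : Set R) with hIdef
      have hG1m : G1 ∈ I := Ideal.subset_span (by simp)
      have hG2m : G2 ∈ I := Ideal.subset_span (by simp)
      have hpm : (3*X 1^6 - C (2*s)*X 1 : R) ∈ I := by
        refine Ideal.mem_span_pair.2 ⟨3*X 1^2 + C (2*s)*X 0, -(C (2*s)*X 1), ?_⟩
        rw [hG1def, hG2def]; ring
      have hqm : (C (2*s)*(X 0*X 1) + X 1^3 : R) ∈ I := by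
        apply cancel
        have hid : C (2*s) * (C (2*s)*(X 0*X 1) + X 1^3 : R)
            = 3*X 1^4 * G1 - u * (3*X 1^6 - C (2*s)*X 1) := by
          rw [hG1def, hudef]; ring
        rw [hid]
        exact sub_mem (I.mul_mem_left _ hG1m) (I.mul_mem_left _ hpm)
      have hrm : (3*X 1^5 - C (2*s) : R) ∈ I := by
        have hid : (3*X 1^5 - C (2*s) : R)
            = (3*X 1^2 + C (2*s)*X 0) * (C (2*s)*(X 0*X 1) + X 1^3) - C (2*s)*G2 := by
          rw [hG2def]; ring
        rw [hid]
        exact sub_mem (I.mul_mem_left _ hqm) (I.mul_mem_left _ hG2m)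
      have hum : u ∈ I := by
        apply cancel
        have hid : C (2*s) * u
            = 3*X 1^4 * (C (2*s)*(X 0*X 1) + X 1^3) - u * (3*X 1^5 - C (2*s)) := by
          rw [hudef]; ring
        rw [hid]
        exact sub_mem (I.mul_mem_left _ hqm) (I.mul_mem_left _ hrm)
      have hr'm : r' ∈ I := by
        have h33 : (C ((3:ℂ)⁻¹) : R) * 3 = 1 := by
          rw [show (3:R) = C 3 from (map_ofNat C 3).symm, ← C_mul]
          norm_num
        have hzz : r' = C ((3:ℂ)⁻¹) * ((3:R) * r') := by
          rw [← mul_assoc, h33, one_mul]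
        rw [hzz]
        apply I.mul_mem_left
        have hid : (3:R) * r' = 3*X 1^5 - C (2*s) := by
          rw [hr'def]; linear_combination -h3
        rw [hid]; exact hrm
      rcases hp with rfl | rfl
      · exact hum
      · exact hr'm
  rw [hIJ]
  set J := Ideal.span ({u, r'} : Set R) with hJdef
  have hum : u ∈ J := Ideal.subset_span (by simp)
  have hr'm : r' ∈ J := Ideal.subset_span (by simp)
  set g : Polynomial ℂ := Polynomial.X^5 - Polynomial.C (2*s/3) with hgdef
  have hg0 : g ≠ 0 := Polynomial.X_pow_sub_C_ne_zero (by norm_num) _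
  have hroot : (AdjoinRoot.root g)^5 = algebraMap ℂ (AdjoinRoot g) (2*s/3) := by
    have h := AdjoinRoot.aeval_eq (f := g) g
    rw [AdjoinRoot.mk_self] at h
    rw [hgdef] at h
    simp only [map_sub, map_pow, Polynomial.aeval_X, Polynomial.aeval_C] at h
    rwa [sub_eq_zero] at h
  -- the backward map
  have hψ0 : (Polynomial.aeval ((Ideal.Quotient.mk J) (X 1))) g = 0 := by
    rw [hgdef]
    simp only [map_sub, map_pow, Polynomial.aeval_X, Polynomial.aeval_C]
    rw [show (algebraMap ℂ (R ⧸ J)) (2*s/3) = Ideal.Quotient.mk J (C (2*s/3)) from rfl]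
    rw [show ((Ideal.Quotient.mk J) (X 1))^5 = Ideal.Quotient.mk J (X 1 ^ 5) from by
      rw [map_pow]]
    rw [← map_sub, Ideal.Quotient.eq_zero_iff_mem]
    exact hr'm
  set ψ : AdjoinRoot g →ₐ[ℂ] R ⧸ J := AdjoinRoot.liftAlgHom g (Algebra.ofId ℂ (R ⧸ J)) (Ideal.Quotient.mk J (X 1))
    (by rw [← hψ0, Polynomial.aeval_def]; rfl)
    with hψdef
  -- the forward map
  set v : Fin 2 → AdjoinRoot g :=
    ![-(algebraMap ℂ (AdjoinRoot g) ((2*s)⁻¹)) * (AdjoinRoot.root g)^2, AdjoinRoot.root g]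
    with hvdef
  have hmapinv : algebraMap ℂ (AdjoinRoot g) (2*s) * algebraMap ℂ (AdjoinRoot g) ((2*s)⁻¹)
      = 1 := by
    rw [← map_mul, mul_inv_cancel₀ h2s, map_one]
  have hker : ∀ a ∈ J, (aeval v : R →ₐ[ℂ] AdjoinRoot g) a = 0 := by
    intro a ha
    have hle : J ≤ RingHom.ker (aeval v : R →ₐ[ℂ] AdjoinRoot g) := by
      rw [hJdef, Ideal.span_le]
      rintro p hp
      simp only [Set.mem_insert_iff, Set.mem_singleton_iff] at hp
      rcases hp with rfl | rfl
      · show (aeval v) u = 0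
        rw [hudef]
        simp only [map_add, map_mul, map_pow, aeval_X, aeval_C, hvdef]
        simp only [Matrix.cons_val_zero, Matrix.cons_val_one, Matrix.head_cons]
        have hz : algebraMap ℂ (AdjoinRoot g) 2 * algebraMap ℂ (AdjoinRoot g) s
            * algebraMap ℂ (AdjoinRoot g) ((2*s)⁻¹) = 1 := by
          rw [← map_mul, ← map_mul, mul_inv_cancel₀ h2s, map_one]
        linear_combination (-(AdjoinRoot.root g)^2) * hz
      · show (aeval v) r' = 0
        rw [hr'def]
        simp only [map_sub, map_pow, aeval_X, aeval_C, hvdef]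
        simp only [Matrix.cons_val_one, Matrix.head_cons, Matrix.cons_val_zero]
        rw [hroot, sub_self]
    exact hle ha
  set φ : R ⧸ J →ₐ[ℂ] AdjoinRoot g := Ideal.Quotient.liftₐ J (aeval v) hker with hφdef
  have hφmk : ∀ p : R, φ (Ideal.Quotient.mk J p) = aeval v p := by
    intro p
    rw [hφdef, Ideal.Quotient.liftₐ_apply]
    rfl
  have h1 : φ.comp ψ = AlgHom.id ℂ (AdjoinRoot g) := by
    apply AdjoinRoot.algHom_ext
    rw [AlgHom.comp_apply, hψdef, AdjoinRoot.liftAlgHom_root, hφmk]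
    simp [hvdef]
  have h2 : ψ.comp φ = AlgHom.id ℂ (R ⧸ J) := by
    apply Ideal.Quotient.algHom_ext ℂ
    apply MvPolynomial.algHom_ext
    intro i
    fin_cases i
    · show ψ (φ (Ideal.Quotient.mk J (X 0))) = Ideal.Quotient.mk J (X 0)
      rw [hφmk]
      simp only [aeval_X, hvdef, Matrix.cons_val_zero]
      rw [map_mul, map_neg, AlgHom.commutes, map_pow, hψdef, AdjoinRoot.liftAlgHom_root]
      rw [show (algebraMap ℂ (R ⧸ J)) ((2*s)⁻¹) = Ideal.Quotient.mk J (C ((2*s)⁻¹)) from rfl]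
      rw [show ((Ideal.Quotient.mk J) (X 1))^2 = Ideal.Quotient.mk J (X 1^2) from by
        rw [map_pow]]
      rw [← map_neg, ← map_mul]
      rw [Ideal.Quotient.mk_eq_mk_iff_sub_mem]
      have hid : ((-(C ((2*s)⁻¹))) * X 1^2 - X 0 : R) = -(C ((2*s)⁻¹)) * u := by
        rw [hudef]
        linear_combination (X 0 : R) * hCinv
      rw [hid]
      exact J.mul_mem_left _ hum
    · show ψ (φ (Ideal.Quotient.mk J (X 1))) = Ideal.Quotient.mk J (X 1)
      rw [hφmk]
      simp only [aeval_X, hvdef, Matrix.cons_val_one, Matrix.head_cons, Matrix.cons_val_zero]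
      rw [hψdef, AdjoinRoot.liftAlgHom_root]
  have e : (R ⧸ J) ≃ₐ[ℂ] AdjoinRoot g := AlgEquiv.ofAlgHom φ ψ h1 h2
  rw [e.toLinearEquiv.finrank_eq]
  rw [(AdjoinRoot.powerBasis hg0).finrank, AdjoinRoot.powerBasis_dim]
  rw [hgdef, Polynomial.natDegree_X_pow_sub_C]
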